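/- Let g be a finite-dimensional real Lie algebra equipped with an inner product ⟨·,·⟩, and let h ⊆ g be a Lie subalgebra such that ad(x) is skew-adjoint for every x ∈ h, i.e. ⟨⁅x,y⁆, z⟩ + ⟨y, ⁅x,z⁆⟩ = 0 for all x ∈ h and all y, z ∈ g. Let n = {y ∈ g : ⁅y, h⁆ ⊆ h} be the normalizer of h in g and let c = {y ∈ n : ⁅x, y⁆ = 0 for all x ∈ h} be the centralizer of h inside n. Then n = h + c; moreover h ∩ c equals the center of h, so the sum is direct whenever h has trivial center (in particular whenever h is semisimple). -/

import Mathlib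

/-- let `g` be a finite-dimensional real Lie algebra with an inner product
`B` (symmetric, positive definite) such that `ad x` is skew-adjoint for every `x` in a
subalgebra `h`.  Let `n = {y : ⁅y, h⁆ ⊆ h}` be the normalizer of `h` and
`c = {y ∈ n : ⁅h, y⁆ = 0}` the centralizer of `h` inside `n`.  Then `n = h + c`;
moreover `h ∩ c` is the center of `h`, so the sum is direct when `h` has trivial
center. -/
theorem stmt_3 (g : Type*) [LieRing g] [LieAlgebra ℝ g] [FiniteDimensional ℝ g]
    (B : g →ₗ[ℝ] g →ₗ[ℝ] ℝ)
    (hBsymm : ∀ x y : g, B x y = B y x)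
    (hBpos : ∀ x : g, x ≠ 0 → 0 < B x x)
    (h : LieSubalgebra ℝ g)
    (hskew : ∀ x ∈ h, ∀ y z : g, B ⁅x, y⁆ z + B y ⁅x, z⁆ = 0) :
    -- n = h + c
    (∀ y : g, (∀ x ∈ h, ⁅y, x⁆ ∈ h) →
      ∃ a ∈ h, ∃ b : g, (∀ x ∈ h, ⁅b, x⁆ ∈ h) ∧ (∀ x ∈ h, ⁅x, b⁆ = 0) ∧ y = a + b) ∧
    -- h ∩ c = center of h
    (∀ y : g,
      (y ∈ h ∧ (∀ x ∈ h, ⁅y, x⁆ ∈ h) ∧ (∀ x ∈ h, ⁅x, y⁆ = 0)) ↔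
      (y ∈ h ∧ ∀ x ∈ h, ⁅x, y⁆ = 0)) ∧
    -- the sum is direct whenever h has trivial center
    ((∀ y ∈ h, (∀ x ∈ h, ⁅x, y⁆ = 0) → y = 0) →
      ∀ y : g, y ∈ h → (∀ x ∈ h, ⁅y, x⁆ ∈ h) → (∀ x ∈ h, ⁅x, y⁆ = 0) → y = 0) := by
  have hrefl : (B : LinearMap.BilinForm ℝ g).IsRefl := by
    intro x y hxy; rw [hBsymm]; exact hxy
  have hzero : ∀ x : g, B x x = 0 → x = 0 := by
    intro x hx
    by_contra hne
    exact absurd hx (hBpos x hne).ne'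
  refine ⟨?_, ?_, ?_⟩
  · -- main decomposition
    intro y hy
    set W := h.toSubmodule with hW
    have hres : (LinearMap.BilinForm.restrict B W).Nondegenerate := by
      constructor
      all_goals
        intro ⟨x, hx⟩ hxall
        have := hxall ⟨x, hx⟩
        simp only [LinearMap.BilinForm.restrict_apply] at this
        exact Subtype.ext (hzero x this)
    have hcompl := LinearMap.BilinForm.isCompl_orthogonal_of_restrict_nondegenerate
      (B := B) (W := W) hrefl hres
    have hsup : W ⊔ LinearMap.BilinForm.orthogonal B W = ⊤ := hcompl.sup_eq_top
    have hy' : y ∈ W ⊔ LinearMap.BilinForm.orthogonal B W := hsup ▸ Submodule.mem_top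
    obtain ⟨a, ha, b, hb, rfl⟩ := Submodule.mem_sup.mp hy'
    have hbperp : ∀ w ∈ h, B w b = 0 := fun w hw =>
      (LinearMap.BilinForm.mem_orthogonal_iff.mp hb) w hw
    -- b normalizes h
    have hbnorm : ∀ x ∈ h, ⁅b, x⁆ ∈ h := by
      intro x hx
      have h1 : ⁅a + b, x⁆ ∈ h := hy x hx
      have h2 : ⁅a, x⁆ ∈ h := h.lie_mem ha hx
      have : ⁅a + b, x⁆ = ⁅a, x⁆ + ⁅b, x⁆ := add_lie a b x
      have := h.sub_mem h1 h2
      rwa [add_lie, add_sub_cancel_left] at this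
    -- ⁅x, b⁆ = 0 for x ∈ h
    have hbcent : ∀ x ∈ h, ⁅x, b⁆ = 0 := by
      intro x hx
      have hmem : ⁅x, b⁆ ∈ h := by
        rw [← lie_skew]
        exact h.neg_mem (hbnorm x hx)
      apply hzero
      have key : ∀ z ∈ h, B z ⁅x, b⁆ = 0 := by
        intro z hz
        have hsk := hskew x hx z b
        have : B ⁅x, z⁆ b = 0 := hbperp _ (h.lie_mem hx hz)
        -- hsk : B ⁅x,z⁆ b + B z ⁅x,b⁆ = 0
        linarith [hsk]
      exact key _ hmem
    exact ⟨a, ha, b, hbnorm, hbcent, rfl⟩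
  · -- h ∩ c = center of h
    intro y
    constructor
    · rintro ⟨hy, _, hc⟩
      exact ⟨hy, hc⟩
    · rintro ⟨hy, hc⟩
      refine ⟨hy, fun x hx => h.lie_mem hy hx, hc⟩
  · -- directness
    intro htriv y hy _ hc
    exact htriv y hy hc
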